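/- The SEP estimator is unbiased: for every finite rooted tree T with cost function c, every budget B ∈ ℕ, every hypernode v, and every admissible family of selection probabilities P (assigning to each hypernode u with S(u) ≠ ∅ a strictly positive probability distribution on H(u)), the expected value of C_SEP(T_v) equals Cost(T_v)/|v|; equivalently, |v|·C_SEP(T_v) is an unbiased estimator of Cost(T_v). (Paper's Theorem 1.) -/

import Mathlib

open Finset

/-- A finite rooted tree on a finite node type `V`.  The root is its own parent,
every non-root node has a parent whose depth is one smaller, and the root is the
unique node of depth `0`. -/
structure FinRootedTree (V : Type) [Fintype V] [DecidableEq V] where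
  root : V
  parent : V → V
  depth : V → ℕ
  depth_root : depth root = 0
  parent_root : parent root = root
  depth_parent : ∀ v, v ≠ root → depth (parent v) + 1 = depth v
  eq_root_of_depth_zero : ∀ v, depth v = 0 → v = root

namespace FinRootedTree

variable {V : Type} [Fintype V] [DecidableEq V]

/-- The set of children of a node. -/
def children (T : FinRootedTree V) (x : V) : Finset V :=
  Finset.univ.filter fun w => w ≠ T.root ∧ T.parent w = x

/-- `S(v)`: the set of all children of nodes of a hypernode `v`. -/
def succs (T : FinRootedTree V) (v : Finset V) : Finset V :=
  v.biUnion T.children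

/-- The set of nodes of the subtree rooted at `x` (the descendants of `x`,
including `x` itself). -/
def desc (T : FinRootedTree V) (x : V) : Finset V :=
  Finset.univ.filter fun w =>
    x ∈ (Finset.range (T.depth w + 1)).image fun k => T.parent^[k] w

/-- `Cost(T_x)`: the total cost of the subtree rooted at `x`. -/
noncomputable def subtreeCost (T : FinRootedTree V) (c : V → ℝ) (x : V) : ℝ :=
  ∑ w ∈ T.desc x, c w

/-- `Cost(T_v)`: the total cost of the forest rooted at the hypernode `v`. -/
noncomputable def forestCost (T : FinRootedTree V) (c : V → ℝ) (v : Finset V) : ℝ :=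
  ∑ x ∈ v, T.subtreeCost c x

/-- `H(v)`: the hyperchildren of `v` for budget `B`, i.e. the subsets of `S(v)`
of size `min B |S(v)|`. -/
def hyper (T : FinRootedTree V) (B : ℕ) (v : Finset V) : Finset (Finset V) :=
  (T.succs v).powersetCard (min B (T.succs v).card)

/-- A hypernode: a nonempty set of distinct nodes, all at the same depth. -/
def IsHypernode (T : FinRootedTree V) (v : Finset V) : Prop :=
  v.Nonempty ∧ ∀ a ∈ v, ∀ b ∈ v, T.depth a = T.depth b

/-- Expectation functional of the SEP estimator `C_SEP(T_v)` (with selection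
probabilities `P`): `sepE T c B P fuel v g` is `E[g(C_SEP(T_v))]`, defined by
the recursion of Algorithm 1, with enough fuel to reach the leaves. -/
noncomputable def sepE (T : FinRootedTree V) (c : V → ℝ) (B : ℕ)
    (P : Finset V → Finset V → ℝ) : ℕ → Finset V → (ℝ → ℝ) → ℝ
  | 0, v, g => g ((∑ x ∈ v, c x) / (v.card : ℝ))
  | fuel + 1, v, g =>
      if T.succs v = ∅ then g ((∑ x ∈ v, c x) / (v.card : ℝ))
      else
        ∑ w ∈ T.hyper B v,
          P v w *
            sepE T c B P fuel w fun y =>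
              g ((∑ x ∈ v, c x) / (v.card : ℝ) +
                (w.card : ℝ) * y /
                  ((v.card : ℝ) * ((((T.succs v).card - 1).choose (w.card - 1) : ℕ) : ℝ) *
                    P v w))

section Aux
set_option linter.unusedSectionVars false
variable (T : FinRootedTree V)

lemma mem_children' {x y : V} : y ∈ T.children x ↔ y ≠ T.root ∧ T.parent y = x := by
  simp [children]

lemma depth_of_mem_children {x y : V} (h : y ∈ T.children x) :
    T.depth y = T.depth x + 1 := by
  rw [mem_children'] at h
  have := T.depth_parent y h.1
  rw [h.2] at this; omega

lemma depth_iter {w : V} : ∀ {k : ℕ}, k ≤ T.depth w →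
    T.depth (T.parent^[k] w) = T.depth w - k := by
  intro k
  induction k with
  | zero => simp
  | succ n ih =>
    intro hk
    have h1 : T.depth (T.parent^[n] w) = T.depth w - n := ih (by omega)
    have hne : T.parent^[n] w ≠ T.root := by
      intro h; rw [h, T.depth_root] at h1; omega
    have := T.depth_parent _ hne
    rw [Function.iterate_succ_apply']
    omega

lemma mem_desc {x w : V} : w ∈ T.desc x ↔ ∃ k ≤ T.depth w, T.parent^[k] w = x := by
  simp [desc, Nat.lt_succ_iff]

lemma depth_lt_card (x : V) : T.depth x < Fintype.card V := by
  have hinj : Set.InjOn (fun k => T.parent^[k] x) (Finset.range (T.depth x + 1)) := by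
    intro a ha b hb hab
    simp only [coe_range, Set.mem_Iio, Nat.lt_succ_iff] at ha hb
    have := T.depth_iter (w := x) ha
    have := T.depth_iter (w := x) hb
    simp only at hab
    rw [hab] at *
    omega
  have := Finset.card_le_card_of_injOn (fun k => T.parent^[k] x)
    (fun a _ => mem_univ _) hinj
  simp only [Finset.card_range, Finset.card_univ] at this
  omega

lemma desc_eq (x : V) :
    T.desc x = insert x ((T.children x).biUnion T.desc) := by
  ext w
  simp only [mem_insert, mem_biUnion, T.mem_desc]
  constructor
  · rintro ⟨k, hk, hkx⟩
    rcases Nat.eq_zero_or_pos k with rfl | hkpos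
    · left; simpa using hkx
    right
    obtain ⟨j, rfl⟩ : ∃ j, k = j + 1 := ⟨k - 1, by omega⟩
    refine ⟨T.parent^[j] w, ?_, j, by omega, rfl⟩
    rw [T.mem_children']
    have hdj : T.depth (T.parent^[j] w) = T.depth w - j := T.depth_iter (by omega)
    refine ⟨?_, by rw [← Function.iterate_succ_apply' T.parent j w]; exact hkx⟩
    intro h
    rw [h, T.depth_root] at hdj
    -- depth w - j = 0, but parent^[j+1] w = parent root = root = x... need contradiction
    -- k = j+1 ≤ depth w means j < depth w so depth w - j ≥ 1
    omega
  · rintro (rfl | ⟨y, hy, k, hk, hky⟩)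
    · exact ⟨0, by omega, rfl⟩
    have hyd : T.depth y = T.depth x + 1 := T.depth_of_mem_children hy
    have hdk : T.depth (T.parent^[k] w) = T.depth w - k := T.depth_iter hk
    rw [hky] at hdk
    refine ⟨k + 1, by omega, ?_⟩
    rw [Function.iterate_succ_apply', hky]
    exact (T.mem_children'.1 hy).2

lemma desc_disjoint {x y : V} (hd : T.depth x = T.depth y) (hxy : x ≠ y) :
    Disjoint (T.desc x) (T.desc y) := by
  rw [Finset.disjoint_left]
  intro w hwx hwy
  obtain ⟨k, hk, rfl⟩ := T.mem_desc.1 hwx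
  obtain ⟨j, hj, hjy⟩ := T.mem_desc.1 hwy
  have h1 := T.depth_iter (w := w) hk
  have h2 := T.depth_iter (w := w) hj
  rw [hjy] at h2
  have : k = j := by omega
  exact hxy (by rw [← hjy, ← this])

lemma not_mem_desc_children {x y : V} (hy : y ∈ T.children x) : x ∉ T.desc y := by
  intro h
  obtain ⟨k, hk, rfl⟩ := T.mem_desc.1 h
  have h1 := T.depth_iter (w := x) hk
  have h2 := T.depth_of_mem_children hy
  omega

lemma subtreeCost_eq (c : V → ℝ) (x : V) :
    T.subtreeCost c x = c x + ∑ y ∈ T.children x, T.subtreeCost c y := by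
  rw [subtreeCost, T.desc_eq x, Finset.sum_insert, Finset.sum_biUnion]
  · rfl
  · intro a ha b hb hab
    exact T.desc_disjoint (by rw [T.depth_of_mem_children ha, T.depth_of_mem_children hb]) hab
  · simp only [mem_biUnion, not_exists]
    intro y hy
    exact T.not_mem_desc_children hy.1 hy.2

lemma children_disjoint {x y : V} (hxy : x ≠ y) :
    Disjoint (T.children x) (T.children y) := by
  rw [Finset.disjoint_left]
  intro w hwx hwy
  exact hxy ((T.mem_children'.1 hwx).2 ▸ (T.mem_children'.1 hwy).2)

lemma forestCost_eq (c : V → ℝ) (v : Finset V) :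
    T.forestCost c v = (∑ x ∈ v, c x) + T.forestCost c (T.succs v) := by
  rw [forestCost, forestCost, succs, Finset.sum_biUnion
    (fun a _ b _ hab => T.children_disjoint hab), ← Finset.sum_add_distrib]
  exact Finset.sum_congr rfl fun x _ => T.subtreeCost_eq c x

lemma card_filter_mem_powersetCard {S : Finset V} {x : V} (hx : x ∈ S) {m : ℕ}
    (hm : 1 ≤ m) :
    ((S.powersetCard m).filter (fun w => x ∈ w)).card = (S.card - 1).choose (m - 1) := by
  have : ((S.powersetCard m).filter (fun w => x ∈ w)).card
      = ((S.erase x).powersetCard (m - 1)).card := by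
    refine Finset.card_nbij' (fun w => w.erase x) (fun u => insert x u) ?_ ?_ ?_ ?_
    · intro w hw
      simp only [Finset.mem_coe, mem_filter, mem_powersetCard] at hw
      simp only [Finset.mem_coe, mem_powersetCard]
      exact ⟨Finset.erase_subset_erase x hw.1.1,
        by rw [Finset.card_erase_of_mem hw.2, hw.1.2]⟩
    · intro u hu
      simp only [Finset.mem_coe, mem_powersetCard] at hu
      have hxu : x ∉ u := fun h => (Finset.mem_erase.1 (hu.1 h)).1 rfl
      simp only [Finset.mem_coe, mem_filter, mem_powersetCard]
      refine ⟨⟨?_, ?_⟩, Finset.mem_insert_self x u⟩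
      · intro a ha
        rcases Finset.mem_insert.1 ha with rfl | ha
        · exact hx
        · exact Finset.erase_subset x S (hu.1 ha)
      · rw [Finset.card_insert_of_notMem hxu, hu.2]; omega
    · intro w hw
      simp only [Finset.mem_coe, mem_filter] at hw
      exact Finset.insert_erase hw.2
    · intro u hu
      simp only [Finset.mem_coe, mem_powersetCard] at hu
      have hxu : x ∉ u := fun h => (Finset.mem_erase.1 (hu.1 h)).1 rfl
      exact Finset.erase_insert hxu
  rw [this, Finset.card_powersetCard, Finset.card_erase_of_mem hx]

lemma sum_sum_powersetCard (S : Finset V) {m : ℕ} (hm : 1 ≤ m) (f : V → ℝ) :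
    ∑ w ∈ S.powersetCard m, ∑ x ∈ w, f x
      = ((S.card - 1).choose (m - 1) : ℝ) * ∑ x ∈ S, f x := by
  have h1 : ∀ w ∈ S.powersetCard m, ∑ x ∈ w, f x = ∑ x ∈ S, if x ∈ w then f x else 0 := by
    intro w hw
    rw [Finset.sum_ite_mem, Finset.inter_comm,
      Finset.inter_eq_left.2 (Finset.mem_powersetCard.1 hw).1]
  rw [Finset.sum_congr rfl h1, Finset.sum_comm]
  rw [Finset.mul_sum]
  apply Finset.sum_congr rfl
  intro x hx
  rw [← Finset.sum_filter, Finset.sum_const,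
    card_filter_mem_powersetCard hx hm, nsmul_eq_mul]

end Aux

lemma sepE_affine (T : FinRootedTree V) (c : V → ℝ) (B : ℕ) (hB : 1 ≤ B)
    (P : Finset V → Finset V → ℝ)
    (hP : ∀ u : Finset V, T.IsHypernode u → T.succs u ≠ ∅ →
      (∀ w ∈ T.hyper B u, 0 < P u w) ∧ (∑ w ∈ T.hyper B u, P u w) = 1) :
    ∀ fuel (v : Finset V), T.IsHypernode v →
      (∀ x ∈ v, Fintype.card V ≤ T.depth x + fuel) → ∀ a b : ℝ,
      sepE T c B P fuel v (fun y => a * y + b)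
        = a * (T.forestCost c v / (v.card : ℝ)) + b := by
  intro fuel
  induction fuel with
  | zero =>
    intro v hv hd a b
    obtain ⟨x, hx⟩ := hv.1
    exact absurd (hd x hx) (by have := T.depth_lt_card x; omega)
  | succ fuel ih =>
    intro v hv hd a b
    by_cases hS : T.succs v = ∅
    · have hforest : T.forestCost c v = ∑ x ∈ v, c x := by
        rw [T.forestCost_eq, hS]; simp [forestCost]
      simp only [sepE, if_pos hS, hforest]
    have hvpos : 0 < v.card := Finset.card_pos.2 hv.1
    have hvR : ((v.card : ℕ) : ℝ) ≠ 0 := Nat.cast_ne_zero.2 (by omega)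
    have hn : 0 < (T.succs v).card :=
      Finset.card_pos.2 (Finset.nonempty_iff_ne_empty.2 hS)
    have hm1 : 1 ≤ min B (T.succs v).card := le_min hB hn
    have hCpos : 0 < ((T.succs v).card - 1).choose (min B (T.succs v).card - 1) :=
      Nat.choose_pos (by omega)
    have hCR : ((((T.succs v).card - 1).choose (min B (T.succs v).card - 1) : ℕ) : ℝ) ≠ 0 :=
      Nat.cast_ne_zero.2 (by omega)
    obtain ⟨hPpos, hPsum⟩ := hP v hv hS
    obtain ⟨x0, hx0⟩ := hv.1
    have hdepthS : ∀ y ∈ T.succs v, T.depth y = T.depth x0 + 1 := by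
      intro y hy
      rw [succs, mem_biUnion] at hy
      obtain ⟨x, hx, hyx⟩ := hy
      rw [T.depth_of_mem_children hyx, hv.2 x hx x0 hx0]
    have key : ∀ w ∈ T.hyper B v,
        P v w * sepE T c B P fuel w (fun y =>
          a * ((∑ x ∈ v, c x) / (v.card : ℝ) +
            (w.card : ℝ) * y /
              ((v.card : ℝ) * ((((T.succs v).card - 1).choose (w.card - 1) : ℕ) : ℝ) *
                P v w)) + b)
        = a / ((v.card : ℝ) *
              ((((T.succs v).card - 1).choose (min B (T.succs v).card - 1) : ℕ) : ℝ)) *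
            T.forestCost c w
          + P v w * (a * ((∑ x ∈ v, c x) / (v.card : ℝ)) + b) := by
      intro w hw
      obtain ⟨hwsub, hwcard⟩ := Finset.mem_powersetCard.1 hw
      have hwne : w.Nonempty := Finset.card_pos.1 (by omega)
      have hwhyp : T.IsHypernode w :=
        ⟨hwne, fun p hp q hq => by
          rw [hdepthS p (hwsub hp), hdepthS q (hwsub hq)]⟩
      have hwfuel : ∀ y ∈ w, Fintype.card V ≤ T.depth y + fuel := by
        intro y hy
        rw [hdepthS y (hwsub hy)]
        have := hd x0 hx0; omega
      have hPw : P v w ≠ 0 := ne_of_gt (hPpos w hw)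
      have hwR : ((w.card : ℕ) : ℝ) ≠ 0 := Nat.cast_ne_zero.2 (by omega)
      have heq : (fun y =>
          a * ((∑ x ∈ v, c x) / (v.card : ℝ) +
            (w.card : ℝ) * y /
              ((v.card : ℝ) * ((((T.succs v).card - 1).choose (w.card - 1) : ℕ) : ℝ) *
                P v w)) + b)
          = (fun y =>
            (a * (w.card : ℝ) /
              ((v.card : ℝ) * ((((T.succs v).card - 1).choose (w.card - 1) : ℕ) : ℝ) *
                P v w)) * y
            + (a * ((∑ x ∈ v, c x) / (v.card : ℝ)) + b)) := by
        funext y; ring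
      rw [heq, ih w hwhyp hwfuel]
      rw [hwcard]
      field_simp
    rw [sepE, if_neg hS, Finset.sum_congr rfl key, Finset.sum_add_distrib,
      ← Finset.mul_sum, ← Finset.sum_mul, hPsum]
    have hsum : ∑ w ∈ T.hyper B v, T.forestCost c w
        = ((((T.succs v).card - 1).choose (min B (T.succs v).card - 1) : ℕ) : ℝ) *
            T.forestCost c (T.succs v) := by
      simpa [forestCost, hyper] using
        sum_sum_powersetCard (T.succs v) hm1 (fun x => T.subtreeCost c x)
    rw [hsum, T.forestCost_eq c v]
    field_simp
    ring

/-- Paper's Theorem 1. -/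
theorem sep_unbiased (T : FinRootedTree V) (c : V → ℝ) (hc : ∀ x, 0 ≤ c x)
    (B : ℕ) (hB : 1 ≤ B) (P : Finset V → Finset V → ℝ)
    (hP : ∀ u : Finset V, T.IsHypernode u → T.succs u ≠ ∅ →
      (∀ w ∈ T.hyper B u, 0 < P u w) ∧ (∑ w ∈ T.hyper B u, P u w) = 1)
    (v : Finset V) (hv : T.IsHypernode v) :
    sepE T c B P (Fintype.card V) v id = T.forestCost c v / (v.card : ℝ) ∧
    (v.card : ℝ) * sepE T c B P (Fintype.card V) v id = T.forestCost c v := by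
  constructor
  · have h := sepE_affine T c B hB P hP (Fintype.card V) v hv
      (fun x _ => by have := T.depth_lt_card x; omega) 1 0
    have hg : (fun y : ℝ => 1 * y + 0) = id := by funext y; simp
    rw [hg] at h
    simpa using h
  · have h := sepE_affine T c B hB P hP (Fintype.card V) v hv
      (fun x _ => by have := T.depth_lt_card x; omega) 1 0
    have hg : (fun y : ℝ => 1 * y + 0) = id := by funext y; simp
    rw [hg] at h
    simp only [one_mul, add_zero] at h
    rw [h]
    have hvR : ((v.card : ℕ) : ℝ) ≠ 0 :=
      Nat.cast_ne_zero.2 (by have := Finset.card_pos.2 hv.1; omega)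
    field_simp

end FinRootedTree
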